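/- arXiv:0904.1635 — 10 statements merged into one kernel-verified Lean document; each statement's English description precedes it below -/
import Mathlib

section
/- If S is an LA-semigroup with left identity e, then every right ideal of S is also a left ideal (hence a two-sided ideal). -/
/-- In an LA-semigroup with left identity, every right ideal is a left ideal. -/
theorem la_right_ideal_is_left {S : Type*} [Mul S]
    (hli : ∀ a b c : S, (a * b) * c = (c * b) * a)
    (e : S) (he : ∀ x : S, e * x = x)
    (I : Set S) (hI : ∀ i ∈ I, ∀ s : S, i * s ∈ I) :
    ∀ s : S, ∀ i ∈ I, s * i ∈ I := by
  intro s i hi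
  have : s * i = (i * s) * e := by rw [hli i s e, he]
  rw [this]
  exact hI _ (hI i hi s) e
end

section
/- If I is a left ideal of an LA-semigroup S with left identity e, then for any a in S, the set aI = {ai : i ∈ I} is a left ideal of S. -/
/-- If I is a left ideal of an LA-semigroup with left identity, then aI is a left ideal. -/
theorem la_aI_left_ideal {S : Type*} [Mul S]
    (hli : ∀ a b c : S, (a * b) * c = (c * b) * a)
    (e : S) (he : ∀ x : S, e * x = x)
    (I : Set S) (hI : ∀ s : S, ∀ i ∈ I, s * i ∈ I) (a : S) :
    ∀ s : S, ∀ x ∈ {x : S | ∃ i ∈ I, x = a * i}, s * x ∈ {x : S | ∃ i ∈ I, x = a * i} := by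
  rintro s x ⟨i, hi, rfl⟩
  refine ⟨s * i, hI s i hi, ?_⟩
  calc s * (a * i) = (e * s) * (a * i) := by rw [he]
    _ = ((a * i) * s) * e := hli _ _ _
    _ = ((s * i) * a) * e := by rw [hli a i s]
    _ = (e * a) * (s * i) := hli _ _ _
    _ = a * (s * i) := by rw [he]
end

section
/- If I is a right ideal of an LA-semigroup S with left identity e, then I² = {ij : i, j ∈ I} is a two-sided ideal of S. -/
/-- If I is a right ideal of an LA-semigroup with left identity, then I² is a two-sided ideal. -/
theorem la_right_ideal_sq {S : Type*} [Mul S]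
    (hli : ∀ a b c : S, (a * b) * c = (c * b) * a)
    (e : S) (he : ∀ x : S, e * x = x)
    (I : Set S) (hI : ∀ i ∈ I, ∀ s : S, i * s ∈ I) :
    (∀ x ∈ {x : S | ∃ i ∈ I, ∃ j ∈ I, x = i * j}, ∀ s : S,
        x * s ∈ {x : S | ∃ i ∈ I, ∃ j ∈ I, x = i * j}) ∧
    (∀ s : S, ∀ x ∈ {x : S | ∃ i ∈ I, ∃ j ∈ I, x = i * j},
        s * x ∈ {x : S | ∃ i ∈ I, ∃ j ∈ I, x = i * j}) := by
  have medial : ∀ a b c d : S, (a * b) * (c * d) = (a * c) * (b * d) := by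
    intro a b c d
    rw [hli a b (c * d), hli c d b, hli (b * d) c a]
  constructor
  · rintro x ⟨i, hi, j, hj, rfl⟩ s
    refine ⟨i * e, hI i hi e, j * s, hI j hj s, ?_⟩
    rw [← he s, medial]
    rw [he s]
  · rintro s x ⟨i, hi, j, hj, rfl⟩
    refine ⟨j * s, hI j hj s, i * e, hI i hi e, ?_⟩
    calc s * (i * j) = (e * s) * (i * j) := by rw [he]
      _ = ((i * j) * s) * e := by rw [hli]
      _ = ((i * e) * (j * s)) * e := by
            rw [← he s, medial, he]
      _ = (e * (j * s)) * (i * e) := by rw [hli]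
      _ = (j * s) * (i * e) := by rw [he]
end

section
/- A proper ideal M of an LA-semigroup S with left identity e is a minimal ideal if and only if M = a²M for all a in S, where a²M = {(aa)m : m ∈ M}. -/
/-- A proper ideal M of an LA-semigroup with left identity is minimal
iff M = a²M for all a. -/
theorem la_minimal_ideal_iff {S : Type*} [Mul S]
    (hli : ∀ a b c : S, (a * b) * c = (c * b) * a)
    (e : S) (he : ∀ x : S, e * x = x)
    (M : Set S) (hMne : M.Nonempty)
    (hMl : ∀ s : S, ∀ m ∈ M, s * m ∈ M)
    (hMr : ∀ m ∈ M, ∀ s : S, m * s ∈ M)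
    (hMproper : M ≠ Set.univ) :
    (∀ I : Set S, I.Nonempty → (∀ s : S, ∀ i ∈ I, s * i ∈ I) →
        (∀ i ∈ I, ∀ s : S, i * s ∈ I) → I ⊆ M → I = M) ↔
    (∀ a : S, M = {x : S | ∃ m ∈ M, x = (a * a) * m}) := by
  have med : ∀ a b c d : S, (a * b) * (c * d) = (a * c) * (b * d) := by
    intro a b c d
    rw [hli a b (c * d), hli c d b, hli (b * d) c a]
  have rev : ∀ a b : S, (a * b) * e = b * a := by
    intro a b
    rw [hli a b e, he]
  have para : ∀ a b c d : S, (a * b) * (c * d) = (d * c) * (b * a) := by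
    intro a b c d
    calc (a * b) * (c * d) = ((b * a) * e) * (c * d) := by rw [rev]
      _ = ((c * d) * e) * (b * a) := hli _ _ _
      _ = (d * c) * (b * a) := by rw [rev]
  constructor
  · intro hmin a
    have := hmin {x : S | ∃ m ∈ M, x = (a * a) * m}
    refine (this ?_ ?_ ?_ ?_).symm
    · obtain ⟨m, hm⟩ := hMne
      exact ⟨(a * a) * m, m, hm, rfl⟩
    · rintro s i ⟨m, hm, rfl⟩
      refine ⟨s * m, hMl s m hm, ?_⟩
      calc s * ((a * a) * m) = (e * s) * ((a * a) * m) := by rw [he]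
        _ = (e * (a * a)) * (s * m) := med _ _ _ _
        _ = (a * a) * (s * m) := by rw [he]
    · rintro i ⟨m, hm, rfl⟩ s
      refine ⟨m * s, hMr m hm s, ?_⟩
      calc ((a * a) * m) * s = (s * m) * (a * a) := hli _ _ _
        _ = (a * a) * (m * s) := para _ _ _ _
    · rintro x ⟨m, hm, rfl⟩
      exact hMl _ _ hm
  · intro hsq I hIne hIl hIr hIM
    apply Set.Subset.antisymm hIM
    intro m hm
    obtain ⟨i, hi⟩ := hIne
    have := hsq i
    have hm' : m ∈ {x : S | ∃ m ∈ M, x = (i * i) * m} := this ▸ hm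
    obtain ⟨m', _, rfl⟩ := hm'
    exact hIr (i * i) (hIr i hi i) m'
end

section
/- An LA-semigroup S with left identity e is fully prime if and only if every ideal of S is idempotent (I = I²) and the set of ideals of S is totally ordered under inclusion. -/
def LAIdeal {S : Type*} [Mul S] (I : Set S) : Prop :=
  I.Nonempty ∧ (∀ s : S, ∀ i ∈ I, s * i ∈ I) ∧ (∀ i ∈ I, ∀ s : S, i * s ∈ I)

def LAsetMul {S : Type*} [Mul S] (A B : Set S) : Set S :=
  {x : S | ∃ a ∈ A, ∃ b ∈ B, x = a * b}

/-- An LA-semigroup with left identity is fully prime iff every ideal is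
idempotent and the ideals are totally ordered under inclusion. -/
theorem la_fully_prime_iff {S : Type*} [Mul S]
    (hli : ∀ a b c : S, (a * b) * c = (c * b) * a)
    (e : S) (he : ∀ x : S, e * x = x) :
    (∀ P : Set S, LAIdeal P → ∀ A B : Set S, LAIdeal A → LAIdeal B →
        LAsetMul A B ⊆ P → A ⊆ P ∨ B ⊆ P) ↔
    ((∀ I : Set S, LAIdeal I → I = LAsetMul I I) ∧
      (∀ A B : Set S, LAIdeal A → LAIdeal B → A ⊆ B ∨ B ⊆ A)) := by
  -- medial law
  have medial : ∀ a b c d : S, (a * b) * (c * d) = (a * c) * (b * d) := by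
    intro a b c d
    rw [hli a b (c * d), hli c d b, hli (b * d) c a]
  -- a(bc) = b(ac)
  have comm3 : ∀ a b c : S, a * (b * c) = b * (a * c) := by
    intro a b c
    calc a * (b * c) = (e * a) * (b * c) := by rw [he]
      _ = (e * b) * (a * c) := medial e a b c
      _ = b * (a * c) := by rw [he]
  -- product of ideals is an ideal
  have prodIdeal : ∀ A B : Set S, LAIdeal A → LAIdeal B → LAIdeal (LAsetMul A B) := by
    intro A B ⟨⟨a0, ha0⟩, hAl, hAr⟩ ⟨⟨b0, hb0⟩, hBl, hBr⟩
    refine ⟨⟨a0 * b0, a0, ha0, b0, hb0, rfl⟩, ?_, ?_⟩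
    · rintro s x ⟨a, ha, b, hb, rfl⟩
      exact ⟨a, ha, s * b, hBl s b hb, comm3 s a b⟩
    · rintro x ⟨a, ha, b, hb, rfl⟩ s
      refine ⟨a * e, hAr a ha e, b * s, hBr b hb s, ?_⟩
      rw [← medial, he]
  -- AB ⊆ A and AB ⊆ B
  have subL : ∀ A B : Set S, LAIdeal A → LAIdeal B → LAsetMul A B ⊆ A := by
    rintro A B ⟨_, _, hAr⟩ _ x ⟨a, ha, b, _, rfl⟩
    exact hAr a ha b
  have subR : ∀ A B : Set S, LAIdeal A → LAIdeal B → LAsetMul A B ⊆ B := by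
    rintro A B _ ⟨_, hBl, _⟩ x ⟨a, _, b, hb, rfl⟩
    exact hBl a b hb
  constructor
  · intro fp
    constructor
    · intro I hI
      have hII := prodIdeal I I hI hI
      have h1 : I ⊆ LAsetMul I I := by
        rcases fp (LAsetMul I I) hII I I hI hI (fun x hx => hx) with h | h
        · exact h
        · exact h
      exact Set.Subset.antisymm h1 (subL I I hI hI)
    · intro A B hA hB
      have hAB := prodIdeal A B hA hB
      rcases fp (LAsetMul A B) hAB A B hA hB (fun x hx => hx) with h | h
      · exact Or.inl (h.trans (subR A B hA hB))
      · exact Or.inr (h.trans (subL A B hA hB))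
  · rintro ⟨hidem, htot⟩ P hP A B hA hB hABP
    rcases htot A B hA hB with h | h
    · left
      intro x hx
      have : x ∈ LAsetMul A A := (hidem A hA) ▸ hx
      rcases this with ⟨a, ha, b, hb, rfl⟩
      exact hABP ⟨a, ha, b, h hb, rfl⟩
    · right
      intro x hx
      have : x ∈ LAsetMul B B := (hidem B hB) ▸ hx
      rcases this with ⟨a, ha, b, hb, rfl⟩
      exact hABP ⟨a, h ha, b, hb, rfl⟩
end

section
/- Let S be an LA-semigroup with left identity e. A left ideal P of S is quasi-prime if and only if for all a, b in S, a(Sb) ⊆ P implies a ∈ P or b ∈ P. -/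
def LALeftIdeal {S : Type*} [Mul S] (I : Set S) : Prop :=
  I.Nonempty ∧ ∀ s : S, ∀ i ∈ I, s * i ∈ I

/-- A left ideal P of an LA-semigroup with left identity is quasi-prime
iff a(Sb) ⊆ P implies a ∈ P or b ∈ P. -/
theorem la_quasi_prime_iff {S : Type*} [Mul S]
    (hli : ∀ a b c : S, (a * b) * c = (c * b) * a)
    (e : S) (he : ∀ x : S, e * x = x)
    (P : Set S) (hP : LALeftIdeal P) :
    (∀ A B : Set S, LALeftIdeal A → LALeftIdeal B → LAsetMul A B ⊆ P →
        A ⊆ P ∨ B ⊆ P) ↔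
    (∀ a b : S, {x : S | ∃ s : S, x = a * (s * b)} ⊆ P → a ∈ P ∨ b ∈ P) := by
  have med : ∀ a b c d : S, (a * b) * (c * d) = (a * c) * (b * d) := by
    intro a b c d
    calc (a * b) * (c * d) = ((c * d) * b) * a := hli a b (c * d)
      _ = ((b * d) * c) * a := by rw [hli c d b]
      _ = (a * c) * (b * d) := hli (b * d) c a
  have swap : ∀ x y z : S, x * (y * z) = y * (x * z) := by
    intro x y z
    calc x * (y * z) = (e * x) * (y * z) := by rw [he]
      _ = (e * y) * (x * z) := med e x y z
      _ = y * (x * z) := by rw [he]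
  have key : ∀ x s a : S, x * (s * a) = ((s * e) * x) * a := by
    intro x s a
    calc x * (s * a) = s * (x * a) := swap x s a
      _ = s * ((a * x) * e) := by rw [← hli e x a, he]
      _ = (a * x) * (s * e) := swap s (a * x) e
      _ = ((s * e) * x) * a := hli a x (s * e)
  constructor
  · intro h a b hab
    have hA : LALeftIdeal {x : S | ∃ s : S, x = s * a} :=
      ⟨⟨a, e, (he a).symm⟩, by rintro t x ⟨s, rfl⟩; exact ⟨(s * e) * t, key t s a⟩⟩
    have hB : LALeftIdeal {x : S | ∃ s : S, x = s * b} :=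
      ⟨⟨b, e, (he b).symm⟩, by rintro t x ⟨s, rfl⟩; exact ⟨(s * e) * t, key t s b⟩⟩
    have hsub : LAsetMul {x : S | ∃ s : S, x = s * a} {x : S | ∃ s : S, x = s * b} ⊆ P := by
      rintro x ⟨u, ⟨s, rfl⟩, v, ⟨t, rfl⟩, rfl⟩
      have : (s * a) * (t * b) = a * ((s * t) * b) := by
        rw [med s a t b, swap (s * t) a b]
      rw [this]
      exact hab ⟨s * t, rfl⟩
    rcases h _ _ hA hB hsub with h1 | h1
    · exact Or.inl (h1 ⟨e, (he a).symm⟩)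
    · exact Or.inr (h1 ⟨e, (he b).symm⟩)
  · intro h A B hA hB hAB
    by_cases hAP : A ⊆ P
    · exact Or.inl hAP
    · right
      obtain ⟨a, haA, haP⟩ := Set.not_subset.mp hAP
      intro b hbB
      rcases h a b (by rintro x ⟨s, rfl⟩; exact hAB ⟨a, haA, s * b, hB.2 s b hbB, rfl⟩) with h1 | h1
      · exact absurd h1 haP
      · exact h1
end

section
/- Let S be an LA-semigroup with left identity e. A left ideal P of S is quasi-semiprime if and only if for all a in S, a(Sa) ⊆ P implies a ∈ P. -/
/-- A left ideal P of an LA-semigroup with left identity is quasi-semiprime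
iff a(Sa) ⊆ P implies a ∈ P. -/
theorem la_quasi_semiprime_iff {S : Type*} [Mul S]
    (hli : ∀ a b c : S, (a * b) * c = (c * b) * a)
    (e : S) (he : ∀ x : S, e * x = x)
    (P : Set S) (hP : LALeftIdeal P) :
    (∀ I : Set S, LALeftIdeal I → LAsetMul I I ⊆ P → I ⊆ P) ↔
    (∀ a : S, {x : S | ∃ s : S, x = a * (s * a)} ⊆ P → a ∈ P) := by
  -- medial law
  have medial : ∀ x y z w : S, (x * y) * (z * w) = (x * z) * (y * w) := by
    intro x y z w
    calc (x * y) * (z * w) = ((z * w) * y) * x := hli x y (z*w)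
      _ = ((y * w) * z) * x := by rw [hli z w y]
      _ = (x * z) * (y * w) := hli (y*w) z x
  -- AG** identity
  have star : ∀ x y z : S, x * (y * z) = y * (x * z) := by
    intro x y z
    calc x * (y * z) = (e * x) * (y * z) := by rw [he]
      _ = (e * y) * (x * z) := medial e x y z
      _ = y * (x * z) := by rw [he]
  constructor
  · intro h a ha
    -- I = Sa
    have key : {x : S | ∃ s : S, x = s * a} ⊆ P := by
      apply h
      · refine ⟨⟨a, e, (he a).symm⟩, ?_⟩
        rintro s i ⟨t, rfl⟩
        refine ⟨(s * e) * t, ?_⟩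
        calc s * (t * a) = t * (s * a) := star s t a
          _ = (e * t) * (s * a) := by rw [he]
          _ = s * ((e * t) * a) := star (e*t) s a
          _ = s * ((a * t) * e) := by rw [hli e t a]
          _ = (a * t) * (s * e) := star s (a*t) e
          _ = ((s * e) * t) * a := hli a t (s*e)
      · rintro x ⟨_, ⟨s, rfl⟩, _, ⟨t, rfl⟩, rfl⟩
        apply ha
        refine ⟨s * t, ?_⟩
        calc (s * a) * (t * a) = (s * t) * (a * a) := medial s a t a
          _ = a * ((s * t) * a) := star (s*t) a a
    have : a ∈ {x : S | ∃ s : S, x = s * a} := ⟨e, (he a).symm⟩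
    exact key this
  · intro h I hI hII x hx
    apply h
    rintro y ⟨s, rfl⟩
    exact hII ⟨x, hx, s * x, hI.2 s x hx, rfl⟩
end

section
/- Every right ideal of a regular LA-semigroup is a two-sided ideal. -/
/-- Every right ideal of a regular LA-semigroup is a two-sided ideal. -/
theorem la_regular_right_ideal_two_sided {S : Type*} [Mul S]
    (hli : ∀ a b c : S, (a * b) * c = (c * b) * a)
    (hreg : ∀ a : S, ∃ x : S, a = (a * x) * a)
    (I : Set S) (hI : ∀ i ∈ I, ∀ s : S, i * s ∈ I) :
    ∀ s : S, ∀ i ∈ I, s * i ∈ I := by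
  intro s i hi
  obtain ⟨x, hx⟩ := hreg s
  have : s * i = (i * s) * (s * x) := by
    conv_lhs => rw [hx]
    rw [hli]
  rw [this]
  exact hI _ (hI i hi s) _
end

section
/- If S is a regular LA-semigroup, P a right ideal of S, and Q a left ideal of S, then PQ = P ∩ Q, where PQ = {pq : p ∈ P, q ∈ Q}. -/
/-- In a regular LA-semigroup, PQ = P ∩ Q for a right ideal P and left ideal Q. -/
theorem la_regular_PQ_eq_inter {S : Type*} [Mul S]
    (hli : ∀ a b c : S, (a * b) * c = (c * b) * a)
    (hreg : ∀ a : S, ∃ x : S, a = (a * x) * a)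
    (P Q : Set S)
    (hP : ∀ p ∈ P, ∀ s : S, p * s ∈ P)
    (hQ : ∀ s : S, ∀ q ∈ Q, s * q ∈ Q) :
    {x : S | ∃ p ∈ P, ∃ q ∈ Q, x = p * q} = P ∩ Q := by
  ext a
  constructor
  · rintro ⟨p, hp, q, hq, rfl⟩
    exact ⟨hP p hp q, hQ p q hq⟩
  · rintro ⟨haP, haQ⟩
    obtain ⟨x, hx⟩ := hreg a
    exact ⟨a * x, hP a haP x, a, haQ, hx⟩
end

section
/- Every ideal in a regular LA-semigroup S is prime if and only if every ideal is strongly irreducible. -/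
/-- In a regular LA-semigroup, every ideal is prime iff every ideal is
strongly irreducible. -/
theorem la_regular_fully_prime_iff_strongly_irreducible {S : Type*} [Mul S]
    (hli : ∀ a b c : S, (a * b) * c = (c * b) * a)
    (hreg : ∀ a : S, ∃ x : S, a = (a * x) * a) :
    (∀ P : Set S, LAIdeal P → ∀ A B : Set S, LAIdeal A → LAIdeal B →
        LAsetMul A B ⊆ P → A ⊆ P ∨ B ⊆ P) ↔
    (∀ P : Set S, LAIdeal P → ∀ A B : Set S, LAIdeal A → LAIdeal B →
        A ∩ B ⊆ P → A ⊆ P ∨ B ⊆ P) := by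
  constructor
  · intro h P hP A B hA hB hsub
    apply h P hP A B hA hB
    rintro x ⟨a, ha, b, hb, rfl⟩
    exact hsub ⟨hA.2.2 a ha b, hB.2.1 a b hb⟩
  · intro h P hP A B hA hB hsub
    apply h P hP A B hA hB
    rintro a ⟨haA, haB⟩
    obtain ⟨x, hx⟩ := hreg a
    exact hsub ⟨a * x, hA.2.2 a haA x, a, haB, hx⟩
end
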